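/- Let ν be a probability measure on ℝ^d that is mutually absolutely continuous with Lebesgue measure. Let f₀ : ℝ^d → ℝ be continuous and bounded below, let C ≥ 0, let (σ_n) ⊂ (0, 1] with σ_n → 0, and for each n let f_n : ℝ^d → ℝ be measurable with sup_{x ∈ ℝ^d} |f_n(x) − f₀(x)| ≤ C σ_n. Let m_n be the Gibbs measure of f_n at temperature σ_n relative to ν, i.e. Z_n := ∫ e^{−f_n(x)/σ_n} ν(dx) ∈ (0, ∞) and m_n(A) = Z_n⁻¹ ∫_A e^{−f_n(x)/σ_n} ν(dx) for all Borel A. If m_n converges weakly to a probability measure m⁰ (that is, ∫ g dm_n → ∫ g dm⁰ for every bounded continuous g : ℝ^d → ℝ), then m⁰({x : f₀(x) > inf_{y ∈ ℝ^d} f₀(y)}) = 0, i.e. m⁰ is concentrated on the set of global minimizers of f₀. -/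

import Mathlib

open MeasureTheory Filter

/-- `m` is the Gibbs measure of `f` at temperature `σ` relative to `ν`:
`Z := ∫ e^{−f/σ} dν ∈ (0, ∞)` and `m(A) = Z⁻¹ ∫_A e^{−f/σ} dν` for every Borel `A`. -/
def IsGibbsMeasure {d : ℕ} (ν : Measure (EuclideanSpace ℝ (Fin d))) (σ : ℝ)
    (f : EuclideanSpace ℝ (Fin d) → ℝ) (m : Measure (EuclideanSpace ℝ (Fin d))) : Prop :=
  Integrable (fun x => Real.exp (-(f x) / σ)) ν ∧
  0 < ∫ x, Real.exp (-(f x) / σ) ∂ν ∧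
  ∀ A : Set (EuclideanSpace ℝ (Fin d)), MeasurableSet A →
    m A = ENNReal.ofReal
      ((∫ x in A, Real.exp (-(f x) / σ) ∂ν) / ∫ x, Real.exp (-(f x) / σ) ∂ν)

/-- Vanishing-temperature (Laplace principle) limit of Gibbs measures:
if `ν` is mutually absolutely continuous with Lebesgue measure, `f₀` is continuous and
bounded below, `sup |f_n − f₀| ≤ C σ_n` with `σ_n ∈ (0,1]`, `σ_n → 0`, `m_n` is the Gibbs
measure of `f_n` at temperature `σ_n`, and `m_n → m⁰` weakly, then `m⁰` is concentrated
on the global minimizers of `f₀`. -/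
theorem stmt8 {d : ℕ} (ν : Measure (EuclideanSpace ℝ (Fin d))) [IsProbabilityMeasure ν]
    (hν₁ : ν ≪ MeasureTheory.volume) (hν₂ : MeasureTheory.volume ≪ ν)
    (f₀ : EuclideanSpace ℝ (Fin d) → ℝ) (hf₀cont : Continuous f₀)
    (hf₀bdd : BddBelow (Set.range f₀))
    (C : ℝ) (hC : 0 ≤ C)
    (σ : ℕ → ℝ) (hσ : ∀ n, σ n ∈ Set.Ioc (0 : ℝ) 1) (hσ₀ : Tendsto σ atTop (nhds 0))
    (f : ℕ → EuclideanSpace ℝ (Fin d) → ℝ) (hfmeas : ∀ n, Measurable (f n))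
    (hfclose : ∀ n x, |f n x - f₀ x| ≤ C * σ n)
    (m : ℕ → Measure (EuclideanSpace ℝ (Fin d)))
    (hGibbs : ∀ n, IsGibbsMeasure ν (σ n) (f n) (m n))
    (m₀ : Measure (EuclideanSpace ℝ (Fin d))) [IsProbabilityMeasure m₀]
    (hweak : ∀ g : EuclideanSpace ℝ (Fin d) → ℝ, Continuous g → (∃ K, ∀ x, |g x| ≤ K) →
      Tendsto (fun n => ∫ x, g x ∂(m n)) atTop (nhds (∫ x, g x ∂m₀))) :
    m₀ {x | (⨅ y, f₀ y) < f₀ x} = 0 := by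
  classical
  set L : ℝ := ⨅ y, f₀ y with hLdef
  have hLle : ∀ x, L ≤ f₀ x := fun x => ciInf_le hf₀bdd x
  have key : ∀ ε : ℝ, 0 < ε → m₀ {x | L + ε ≤ f₀ x} = 0 := by
    intro ε hε
    set A : Set (EuclideanSpace ℝ (Fin d)) := {x | L + ε ≤ f₀ x} with hAdef
    set A' : Set (EuclideanSpace ℝ (Fin d)) := {x | L + ε/2 ≤ f₀ x} with hA'def
    have hAmeas : MeasurableSet A := hf₀cont.measurable measurableSet_Ici
    have hA'meas : MeasurableSet A' := hf₀cont.measurable measurableSet_Ici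
    -- the cutoff function
    set g : EuclideanSpace ℝ (Fin d) → ℝ :=
      fun x => max 0 (min 1 ((f₀ x - L - ε/2) / (ε/2))) with hgdef
    have hgcont : Continuous g :=
      continuous_const.max (continuous_const.min
        (((hf₀cont.sub continuous_const).sub continuous_const).div_const _))
    have hg0 : ∀ x, 0 ≤ g x := fun x => le_max_left _ _
    have hg1 : ∀ x, g x ≤ 1 := fun x => max_le (by norm_num) (min_le_left _ _)
    have hgabs : ∀ x, |g x| ≤ 1 := fun x => abs_le.mpr ⟨by linarith [hg0 x], hg1 x⟩
    have hgA : ∀ x ∈ A, g x = 1 := by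
      intro x hx
      have hx' : L + ε ≤ f₀ x := hx
      have h1 : (1 : ℝ) ≤ (f₀ x - L - ε/2) / (ε/2) := by
        rw [le_div_iff₀ (by positivity)]; linarith
      simp [hgdef, min_eq_left h1]
    have hgle : ∀ x, g x ≤ A'.indicator (fun _ => (1:ℝ)) x := by
      intro x
      by_cases hx : x ∈ A'
      · rw [Set.indicator_of_mem hx]; exact hg1 x
      · rw [Set.indicator_of_notMem hx]
        have hx' : f₀ x < L + ε/2 := by
          by_contra h; exact hx (by simpa [hA'def] using not_lt.mp h)
        have hneg : (f₀ x - L - ε/2) / (ε/2) ≤ 0 :=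
          div_nonpos_of_nonpos_of_nonneg (by linarith) (by positivity)
        have : min 1 ((f₀ x - L - ε/2) / (ε/2)) ≤ 0 := le_trans (min_le_right _ _) hneg
        simp [hgdef, max_eq_left this]
    -- m n are probability measures
    have hprob : ∀ n, IsProbabilityMeasure (m n) := by
      intro n
      obtain ⟨hint, hZpos, hmeq⟩ := hGibbs n
      refine ⟨?_⟩
      rw [hmeq Set.univ MeasurableSet.univ, Measure.restrict_univ,
        div_self hZpos.ne', ENNReal.ofReal_one]
    -- step 1 : ∫ g dm_n ≤ (m n A').toReal
    have hgint : ∀ μ : Measure (EuclideanSpace ℝ (Fin d)), IsProbabilityMeasure μ →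
        Integrable g μ := by
      intro μ hμ
      refine Integrable.mono' (integrable_const 1) hgcont.aestronglyMeasurable ?_
      exact Eventually.of_forall fun x => by simpa using hgabs x
    have hindint : ∀ μ : Measure (EuclideanSpace ℝ (Fin d)), IsProbabilityMeasure μ →
        Integrable (A'.indicator (fun _ => (1:ℝ))) μ :=
      fun μ hμ => (integrable_const 1).indicator hA'meas
    have hstep1 : ∀ n, ∫ x, g x ∂(m n) ≤ (m n A').toReal := by
      intro n
      have := hprob n
      calc ∫ x, g x ∂(m n) ≤ ∫ x, A'.indicator (fun _ => (1:ℝ)) x ∂(m n) :=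
            integral_mono (hgint _ (hprob n)) (hindint _ (hprob n)) hgle
        _ = (m n A').toReal := by
            rw [integral_indicator_const (1:ℝ) hA'meas]; simp; rfl
    -- the open set near the minimum
    set B : Set (EuclideanSpace ℝ (Fin d)) := {x | f₀ x < L + ε/4} with hBdef
    have hBopen : IsOpen B := isOpen_lt hf₀cont continuous_const
    have hBmeas : MeasurableSet B := hBopen.measurableSet
    have hBne : B.Nonempty := by
      obtain ⟨x, hx⟩ := exists_lt_of_ciInf_lt
        (show (⨅ y, f₀ y) < L + ε/4 from by rw [← hLdef]; linarith)
      exact ⟨x, hx⟩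
    have hνB : 0 < ν B := by
      rcases (zero_le : 0 ≤ ν B).lt_or_eq with h | h
      · exact h
      · exfalso
        have hv : MeasureTheory.volume B = 0 := hν₂ h.symm
        exact absurd hv (hBopen.measure_pos MeasureTheory.volume hBne).ne'
    set b : ℝ := (ν B).toReal with hbdef
    have hb : 0 < b := ENNReal.toReal_pos hνB.ne' (measure_ne_top ν B)
    -- the key Gibbs bound
    have hbound : ∀ n, (m n A').toReal ≤
        Real.exp (2*C) / b * Real.exp (-(ε/4) / σ n) := by
      intro n
      obtain ⟨hint, hZpos, hmeq⟩ := hGibbs n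
      have hs0 : 0 < σ n := (hσ n).1
      set s := σ n with hsdef
      set Z : ℝ := ∫ x, Real.exp (-(f n x) / s) ∂ν with hZdef
      have hnumnn : 0 ≤ ∫ x in A', Real.exp (-(f n x) / s) ∂ν :=
        setIntegral_nonneg hA'meas fun x _ => (Real.exp_pos _).le
      -- numerator bound
      have hnum : ∫ x in A', Real.exp (-(f n x) / s) ∂ν ≤
          Real.exp C * Real.exp (-(L + ε/2) / s) := by
        have hptw : ∀ x ∈ A', Real.exp (-(f n x) / s) ≤
            Real.exp C * Real.exp (-(L + ε/2) / s) := by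
          intro x hx
          have hx' : L + ε/2 ≤ f₀ x := hx
          have h1 : f₀ x - C * s ≤ f n x := by
            have := abs_le.mp (hfclose n x); linarith [this.1]
          rw [← Real.exp_add]
          apply Real.exp_le_exp.mpr
          rw [show C + -(L + ε/2)/s = (C * s - (L + ε/2))/s by
            field_simp; ring]
          exact div_le_div_of_nonneg_right (by linarith) hs0.le
        calc ∫ x in A', Real.exp (-(f n x) / s) ∂ν
            ≤ ∫ _x in A', Real.exp C * Real.exp (-(L + ε/2) / s) ∂ν :=
              setIntegral_mono_on hint.integrableOn
                ((integrableOn_const_iff).mpr (Or.inr (measure_lt_top ν A'))) hA'meas hptw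
          _ = (ν A').toReal * (Real.exp C * Real.exp (-(L + ε/2) / s)) := by
              rw [setIntegral_const]; rfl
          _ ≤ 1 * (Real.exp C * Real.exp (-(L + ε/2) / s)) := by
              apply mul_le_mul_of_nonneg_right _ (by positivity)
              exact ENNReal.toReal_le_of_le_ofReal one_pos.le (by simp [prob_le_one])
          _ = Real.exp C * Real.exp (-(L + ε/2) / s) := one_mul _
      -- denominator bound
      have hden : Real.exp (-C) * Real.exp (-(L + ε/4) / s) * b ≤ Z := by
        have hptw : ∀ x ∈ B, Real.exp (-C) * Real.exp (-(L + ε/4) / s) ≤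
            Real.exp (-(f n x) / s) := by
          intro x hx
          have hx' : f₀ x < L + ε/4 := hx
          have h1 : f n x ≤ f₀ x + C * s := by
            have := abs_le.mp (hfclose n x); linarith [this.2]
          rw [← Real.exp_add]
          apply Real.exp_le_exp.mpr
          rw [show -C + -(L + ε/4)/s = (-C * s - (L + ε/4))/s by field_simp; ring]
          exact div_le_div_of_nonneg_right (by linarith) hs0.le
        calc Real.exp (-C) * Real.exp (-(L + ε/4) / s) * b
            = ∫ _x in B, Real.exp (-C) * Real.exp (-(L + ε/4) / s) ∂ν := by
              rw [setIntegral_const]; rw [smul_eq_mul, measureReal_def, hbdef]; ring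
          _ ≤ ∫ x in B, Real.exp (-(f n x) / s) ∂ν :=
              setIntegral_mono_on
                ((integrableOn_const_iff).mpr (Or.inr (measure_lt_top ν B)))
                hint.integrableOn hBmeas hptw
          _ ≤ Z := setIntegral_le_integral hint
                (Eventually.of_forall fun x => (Real.exp_pos _).le)
      have hdpos : 0 < Real.exp (-C) * Real.exp (-(L + ε/4) / s) * b := by positivity
      have htR : (m n A').toReal =
          (∫ x in A', Real.exp (-(f n x) / s) ∂ν) / Z := by
        rw [hmeq A' hA'meas, ENNReal.toReal_ofReal (div_nonneg hnumnn hZpos.le)]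
      rw [htR]
      calc (∫ x in A', Real.exp (-(f n x) / s) ∂ν) / Z
          ≤ (Real.exp C * Real.exp (-(L + ε/2) / s)) /
            (Real.exp (-C) * Real.exp (-(L + ε/4) / s) * b) :=
            div_le_div₀ (by positivity) hnum hdpos hden
        _ = Real.exp (2*C) / b * Real.exp (-(ε/4) / s) := by
            have e1 : Real.exp C * Real.exp (-(L + ε/2) / s) =
                Real.exp (2*C) * Real.exp (-(ε/4) / s) *
                (Real.exp (-C) * Real.exp (-(L + ε/4) / s)) := by
              rw [← Real.exp_add, ← Real.exp_add, ← Real.exp_add, ← Real.exp_add]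
              congr 1
              field_simp
              ring
            rw [e1]
            have hD : Real.exp (-C) * Real.exp (-(L + ε/4) / s) ≠ 0 := by positivity
            field_simp
    -- the bound tends to 0
    have hrlim : Tendsto (fun n => Real.exp (2*C) / b * Real.exp (-(ε/4) / σ n))
        atTop (nhds 0) := by
      have h1 : Tendsto (fun n => (σ n)⁻¹) atTop atTop := by
        apply Filter.Tendsto.inv_tendsto_nhdsGT_zero
        exact tendsto_nhdsWithin_of_tendsto_nhds_of_eventually_within _ hσ₀
          (Eventually.of_forall fun n => (hσ n).1)
      have h2 : Tendsto (fun n => (ε/4) * (σ n)⁻¹) atTop atTop :=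
        h1.const_mul_atTop (by positivity)
      have h3 : Tendsto (fun n => Real.exp (-((ε/4) * (σ n)⁻¹))) atTop (nhds 0) :=
        Real.tendsto_exp_atBot.comp (tendsto_neg_atTop_atBot.comp h2)
      have h4 : Tendsto (fun n => Real.exp (2*C) / b * Real.exp (-((ε/4) * (σ n)⁻¹)))
          atTop (nhds 0) := by
        simpa using h3.const_mul (Real.exp (2*C) / b)
      convert h4 using 2 with n
      congr 1
      ring
    -- squeeze
    have hsq : Tendsto (fun n => ∫ x, g x ∂(m n)) atTop (nhds 0) := by
      refine tendsto_of_tendsto_of_tendsto_of_le_of_le tendsto_const_nhds hrlim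
        (fun n => integral_nonneg hg0) (fun n => (hstep1 n).trans (hbound n))
    have hgm₀ : ∫ x, g x ∂m₀ = 0 :=
      tendsto_nhds_unique (hweak g hgcont ⟨1, hgabs⟩) hsq
    -- conclude
    have hle : (m₀ A).toReal ≤ ∫ x, g x ∂m₀ := by
      calc (m₀ A).toReal = ∫ x, A.indicator (fun _ => (1:ℝ)) x ∂m₀ := by
            rw [integral_indicator_const (1:ℝ) hAmeas]; simp; rfl
        _ ≤ ∫ x, g x ∂m₀ := by
            apply integral_mono ((integrable_const 1).indicator hAmeas)
              (hgint m₀ inferInstance)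
            intro x
            by_cases hx : x ∈ A
            · rw [Set.indicator_of_mem hx, hgA x hx]
            · rw [Set.indicator_of_notMem hx]; exact hg0 x
    rw [hgm₀] at hle
    have : (m₀ A).toReal = 0 := le_antisymm hle ENNReal.toReal_nonneg
    rcases (ENNReal.toReal_eq_zero_iff _).mp this with h | h
    · exact h
    · exact absurd h (measure_ne_top m₀ A)
  have hsub : {x | L < f₀ x} ⊆ ⋃ k : ℕ, {x | L + 1/(k+1) ≤ f₀ x} := by
    intro x hx
    have hpos : (0:ℝ) < f₀ x - L := sub_pos.mpr hx
    obtain ⟨k, hk⟩ := exists_nat_one_div_lt hpos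
    refine Set.mem_iUnion.mpr ⟨k, ?_⟩
    simp only [Set.mem_setOf_eq]
    push_cast
    push_cast at hk
    linarith
  refine measure_mono_null hsub (measure_iUnion_null fun k => key _ ?_)
  positivity
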